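/- Let (V, ν_w) be a family of welfare allocation games parametrized by weight vectors w, with |ν(V,w) - ν(V,w')| ≤ ‖w - w'‖₁ for all w, w'. Suppose A maps each weight vector w to a vector A(w) ∈ ℝ≥0^V with ‖A(w)‖₁ ≤ D·ν(V,w), Σ_{v∈S} A(w)_v ≥ ν(S,w) for all S ⊆ V, and ‖A(w) - A(w')‖₁ ≤ L‖w - w'‖₁. Then the rescaled allocation x(w) = (ν(V,w)/‖A(w)‖₁)·A(w) lies in the (1/D)-approximate core and satisfies ‖x(w) - x(w')‖₁ ≤ (2L+1)‖w - w'‖₁ for all w, w'. -/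

import Mathlib

theorem stmt_7 {V E : Type*} [Fintype V] [Fintype E]
    (ν : (E → ℝ) → Finset V → ℝ) (A : (E → ℝ) → V → ℝ) (D L : ℝ)
    (hD : 1 ≤ D) (hL : 0 < L)
    (hνnn : ∀ w S, 0 ≤ ν w S)
    (hνlip : ∀ w w', |ν w Finset.univ - ν w' Finset.univ| ≤ ∑ e, |w e - w' e|)
    (hAnn : ∀ w v, 0 ≤ A w v)
    (hνpos : ∀ w, 0 < ν w Finset.univ)
    (hApos : ∀ w, 0 < ∑ v, A w v)
    (hub : ∀ w, ∑ v, A w v ≤ D * ν w Finset.univ)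
    (hlb : ∀ w (S : Finset V), ν w S ≤ ∑ v ∈ S, A w v)
    (hAlip : ∀ w w', ∑ v, |A w v - A w' v| ≤ L * ∑ e, |w e - w' e|) :
    (∀ w, (∀ S : Finset V, S ⊂ Finset.univ →
        (1 / D) * ν w S ≤ ∑ v ∈ S, (ν w Finset.univ / ∑ u, A w u) * A w v) ∧
      ∑ v, (ν w Finset.univ / ∑ u, A w u) * A w v = ν w Finset.univ) ∧
    (∀ w w', ∑ v, |(ν w Finset.univ / ∑ u, A w u) * A w v -
          (ν w' Finset.univ / ∑ u, A w' u) * A w' v|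
        ≤ (2 * L + 1) * ∑ e, |w e - w' e|) := by
  have key : ∀ w, ν w Finset.univ ≤ ∑ v, A w v := fun w => hlb w Finset.univ
  constructor
  · intro w
    have hspos := hApos w
    have hν := hνpos w
    have hcD : 1 / D ≤ ν w Finset.univ / ∑ u, A w u := by
      rw [div_le_div_iff₀ (by linarith) hspos]
      nlinarith [hub w]
    constructor
    · intro S _
      rw [← Finset.mul_sum]
      have h1 : (1/D) * ν w S ≤ (ν w Finset.univ / ∑ u, A w u) * ν w S :=
        mul_le_mul_of_nonneg_right hcD (hνnn w S)
      have h2 : (ν w Finset.univ / ∑ u, A w u) * ν w S ≤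
          (ν w Finset.univ / ∑ u, A w u) * ∑ v ∈ S, A w v :=
        mul_le_mul_of_nonneg_left (hlb w S) (by positivity)
      linarith
    · rw [← Finset.mul_sum]
      exact div_mul_cancel₀ _ hspos.ne'
  · intro w w'
    set s := ∑ v, A w v with hs
    set s' := ∑ v, A w' v with hs'
    set c := ν w Finset.univ / s with hc
    set c' := ν w' Finset.univ / s' with hc'
    have hspos := hApos w
    have hs'pos := hApos w'
    have hν := hνpos w
    have hc1 : c ≤ 1 := div_le_one_of_le₀ (key w) hspos.le
    have hcnn : 0 ≤ c := div_nonneg (hνnn w _) hspos.le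
    have hpt : ∀ v, |c * A w v - c' * A w' v| ≤ c * |A w v - A w' v| + |c - c'| * A w' v := by
      intro v
      have h : c * A w v - c' * A w' v = c * (A w v - A w' v) + (c - c') * A w' v := by ring
      rw [h]
      calc |c * (A w v - A w' v) + (c - c') * A w' v|
          ≤ |c * (A w v - A w' v)| + |(c - c') * A w' v| := abs_add_le _ _
        _ = c * |A w v - A w' v| + |c - c'| * A w' v := by
            rw [abs_mul, abs_mul, abs_of_nonneg hcnn, abs_of_nonneg (hAnn w' v)]
    have hsum : ∑ v, |c * A w v - c' * A w' v|
        ≤ c * (∑ v, |A w v - A w' v|) + |c - c'| * s' := by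
      calc ∑ v, |c * A w v - c' * A w' v|
          ≤ ∑ v, (c * |A w v - A w' v| + |c - c'| * A w' v) :=
            Finset.sum_le_sum fun v _ => hpt v
        _ = c * (∑ v, |A w v - A w' v|) + |c - c'| * s' := by
            rw [Finset.sum_add_distrib, ← Finset.mul_sum, ← Finset.mul_sum]
    have hss' : |s - s'| ≤ ∑ v, |A w v - A w' v| := by
      rw [hs, hs', ← Finset.sum_sub_distrib]
      exact Finset.abs_sum_le_sum_abs _ _
    have hid : (c - c') * s' = (ν w Finset.univ / s) * (s' - s) +
        (ν w Finset.univ - ν w' Finset.univ) := by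
      rw [hc, hc']
      have hsne : s ≠ 0 := hspos.ne'
      have hs'ne : s' ≠ 0 := hs'pos.ne'
      field_simp
      ring
    have hcc' : |c - c'| * s' ≤ |s - s'| + |ν w Finset.univ - ν w' Finset.univ| := by
      have h1 : |c - c'| * s' = |(c - c') * s'| := by
        rw [abs_mul, abs_of_nonneg hs'pos.le]
      rw [h1, hid]
      calc |(ν w Finset.univ / s) * (s' - s) + (ν w Finset.univ - ν w' Finset.univ)|
          ≤ |(ν w Finset.univ / s) * (s' - s)| + |ν w Finset.univ - ν w' Finset.univ| :=
            abs_add_le _ _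
        _ ≤ |s - s'| + |ν w Finset.univ - ν w' Finset.univ| := by
            rw [abs_mul, abs_of_nonneg hcnn, abs_sub_comm s' s]
            nlinarith [abs_nonneg (s - s'), hcnn, hc1]
    have hA := hAlip w w'
    have hν' := hνlip w w'
    have hd : 0 ≤ ∑ e, |w e - w' e| := Finset.sum_nonneg fun e _ => abs_nonneg _
    have hAnn' : 0 ≤ ∑ v, |A w v - A w' v| := Finset.sum_nonneg fun v _ => abs_nonneg _
    nlinarith [hsum, hcc', hss', hA, hν', mul_le_mul_of_nonneg_right hc1 hAnn']
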